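/- arXiv:1405.7931 — 5 statements merged into one kernel-verified Lean document; each statement's English description precedes it below -/
import Mathlib

section
/- Let G be a group with a right-invariant metric d, and let φ̄: G → ℝ be a homogeneous quasimorphism with defect D that is Lipschitz with constant C with respect to d (i.e. |φ̄(g)| ≤ C·d(1,g) for all g) and vanishes on a subset A ⊆ G that is closed under inverses. If there exists f ∈ G with φ̄(f) ≠ 0, then for every K ≥ 0 there exists f' ∈ G with d(f', h) ≥ K for all h ∈ A; that is, A is not coarsely dense in (G, d). -/
/-- If a group with a right-invariant metric admits a homogeneous quasimorphism that is
Lipschitz w.r.t. the metric, vanishes on an inverse-closed subset `A`, and is nonzero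
somewhere, then `A` is not coarsely dense. -/
theorem not_coarsely_dense_of_qm {G : Type*} [Group G] [MetricSpace G]
    (hinv : ∀ a b f : G, dist (a * f) (b * f) = dist a b)
    (φ : G → ℝ) (D C : ℝ)
    (hD : ∀ a b : G, |φ (a * b) - φ a - φ b| ≤ D)
    (hhom : ∀ (g : G) (k : ℤ), φ (g ^ k) = k * φ g)
    (hLip : ∀ g : G, |φ g| ≤ C * dist 1 g)
    (A : Set G) (hAinv : ∀ a ∈ A, a⁻¹ ∈ A)
    (hvan : ∀ a ∈ A, φ a = 0)
    (hf : ∃ f : G, φ f ≠ 0) :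
    ∀ K : ℝ, 0 ≤ K → ∃ f' : G, ∀ h ∈ A, K ≤ dist f' h := by
  intro K hK
  obtain ⟨f, hfne⟩ := hf
  have hφf : 0 < |φ f| := abs_pos.mpr hfne
  have hC : 0 < C := by
    by_contra hCle
    push_neg at hCle
    have h1 := hLip f
    have : C * dist 1 f ≤ 0 := mul_nonpos_of_nonpos_of_nonneg hCle dist_nonneg
    linarith [abs_pos.mpr hfne]
  obtain ⟨n, hn⟩ := exists_nat_ge ((C * K + D) / |φ f|)
  refine ⟨f ^ (n : ℤ), fun h hA => ?_⟩
  -- φ (h⁻¹) = 0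
  have hφh : φ h⁻¹ = 0 := by
    have := hhom h (-1)
    simp only [zpow_neg, zpow_one] at this
    rw [this, hvan h hA]; ring
  -- lower bound on |φ (f^n * h⁻¹)|
  have hquasi := hD (f ^ (n : ℤ)) h⁻¹
  have hpow : φ (f ^ (n : ℤ)) = n * φ f := by
    rw [hhom]; norm_num
  have hlow : (n : ℝ) * |φ f| - D ≤ |φ (f ^ (n : ℤ) * h⁻¹)| := by
    have h1 : |φ (f ^ (n : ℤ))| ≤ |φ (f ^ (n : ℤ) * h⁻¹)| + D := by
      calc |φ (f ^ (n : ℤ))|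
          = |φ (f ^ (n : ℤ) * h⁻¹) - (φ (f ^ (n : ℤ) * h⁻¹) - φ (f ^ (n : ℤ)) - φ h⁻¹) - φ h⁻¹| := by
            ring_nf
        _ ≤ |φ (f ^ (n : ℤ) * h⁻¹)| + |φ (f ^ (n : ℤ) * h⁻¹) - φ (f ^ (n : ℤ)) - φ h⁻¹| + |φ h⁻¹| := by
            exact (abs_sub _ _).trans (by gcongr; exact abs_sub _ _)
        _ ≤ |φ (f ^ (n : ℤ) * h⁻¹)| + D + 0 := by
            have hq2 : |φ (f ^ (n : ℤ) * h⁻¹) - φ (f ^ (n : ℤ))| ≤ D := by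
              rw [hφh, sub_zero] at hquasi; exact hquasi
            rw [hφh]; simp only [abs_zero, sub_zero]; gcongr
        _ = |φ (f ^ (n : ℤ) * h⁻¹)| + D := by ring
    have h2 : |φ (f ^ (n : ℤ))| = (n : ℝ) * |φ f| := by
      rw [hpow, abs_mul, abs_of_nonneg (by positivity : (0:ℝ) ≤ (n:ℝ))]
    linarith
  -- distance computation
  have hdist : dist (f ^ (n : ℤ)) h = dist 1 (f ^ (n : ℤ) * h⁻¹) := by
    rw [dist_comm 1, ← hinv (f ^ (n : ℤ) * h⁻¹) 1 h]
    simp [mul_assoc]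
  have hL := hLip (f ^ (n : ℤ) * h⁻¹)
  have hKn : C * K + D ≤ (n : ℝ) * |φ f| := by
    rw [div_le_iff₀ hφf] at hn
    linarith
  rw [hdist]
  have : C * K ≤ C * dist 1 (f ^ (n : ℤ) * h⁻¹) := by linarith
  exact le_of_mul_le_mul_left this hC
end

section
/- Let G be a group with a right-invariant metric d, and let φ̄: G → ℝ be a homogeneous quasimorphism with defect D, Lipschitz with constant C with respect to d, vanishing on a symmetric subset A ⊆ G, and with φ̄(f) = c > 0 for some f ∈ G. Then for every m ∈ ℕ and every product h = h₁⋯h_k of k elements of A, one has C·d(f^m, h) ≥ c·m − k·D. Consequently, for every K ≥ 0 and k ∈ ℕ there exists f' ∈ G with d(f', A^k) ≥ K, where A^k denotes the set of products of k elements of A. -/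
/-- Quantitative version: `C·d(f^m, h₁⋯h_k) ≥ c·m − k·D` for products of `k` elements
of `A`, and consequently each `A^k` is not coarsely dense. -/
theorem not_coarsely_dense_powers_of_qm {G : Type*} [Group G] [MetricSpace G]
    (hinv : ∀ a b f : G, dist (a * f) (b * f) = dist a b)
    (φ : G → ℝ) (D C : ℝ)
    (hD : ∀ a b : G, |φ (a * b) - φ a - φ b| ≤ D)
    (hhom : ∀ (g : G) (k : ℤ), φ (g ^ k) = k * φ g)
    (hLip : ∀ g : G, |φ g| ≤ C * dist 1 g)
    (A : Set G) (hAsymm : A⁻¹ = A)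
    (hvan : ∀ a ∈ A, φ a = 0)
    (f : G) (c : ℝ) (hc : φ f = c) (hcpos : 0 < c) :
    (∀ (m k : ℕ) (l : List G), (∀ h ∈ l, h ∈ A) → l.length = k →
        c * m - k * D ≤ C * dist (f ^ m) l.prod) ∧
    ∀ K : ℝ, 0 ≤ K → ∀ k : ℕ, ∃ f' : G,
      ∀ l : List G, (∀ h ∈ l, h ∈ A) → l.length = k → K ≤ dist f' l.prod := by
  have hone : φ (1 : G) = 0 := by simpa using hhom 1 0
  have hfm : ∀ m : ℕ, φ (f ^ m) = m * c := by
    intro m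
    have := hhom f (m : ℤ)
    rw [zpow_natCast] at this
    simp [this, hc]
  -- bound on products of elements of A
  have haux : ∀ (t : List G) (a : G), a ∈ A → (∀ h ∈ t, h ∈ A) →
      |φ ((a :: t).prod)| ≤ (t.length : ℝ) * D := by
    intro t
    induction t with
    | nil =>
      intro a ha _
      simp [hvan a ha]
    | cons b t ih =>
      intro a ha hmem
      have hb : b ∈ A := hmem b (by simp)
      have ht : ∀ h ∈ t, h ∈ A := fun h hh => hmem h (by simp [hh])
      have h1 := ih b hb ht
      have h2 := hD a ((b :: t).prod)
      rw [hvan a ha] at h2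
      have h3 : (a :: b :: t).prod = a * (b :: t).prod := by simp
      rw [h3]
      have := abs_le.mp h2
      have h4 := abs_le.mp h1
      rw [abs_le]
      simp only [List.length_cons]
      push_cast
      constructor <;> nlinarith [abs_nonneg (φ ((b :: t).prod))]
  have main : ∀ (m k : ℕ) (l : List G), (∀ h ∈ l, h ∈ A) → l.length = k →
      c * m - k * D ≤ C * dist (f ^ m) l.prod := by
    intro m k l hl hlen
    subst hlen
    cases l with
    | nil =>
      simp only [List.prod_nil, List.length_nil, Nat.cast_zero, zero_mul, sub_zero]
      have h1 := hLip (f ^ m)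
      rw [hfm m, abs_of_nonneg (by positivity)] at h1
      rw [dist_comm]
      linarith
    | cons a t =>
      set p := (a :: t).prod with hp
      set g := f ^ m * p⁻¹ with hg
      have hgp : g * p = f ^ m := by rw [hg, inv_mul_cancel_right]
      have h2 := hD g p
      rw [hgp, hfm m] at h2
      have ha : a ∈ A := hl a (by simp)
      have ht : ∀ h ∈ t, h ∈ A := fun h hh => hl h (by simp [hh])
      have h3 := haux t a ha ht
      have h4 := hLip g
      have hdist : dist (f ^ m) p = dist 1 g := by
        have := hinv g 1 p
        rw [hgp, one_mul] at this
        rw [this, dist_comm]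
      rw [hdist]
      have h2' := abs_le.mp h2
      have h3' := abs_le.mp h3
      have h4' := le_abs_self (φ g)
      simp only [List.length_cons]
      push_cast
      push_cast at h3'
      linarith
  refine ⟨main, ?_⟩
  intro K hK k
  have hCpos : 0 < C := by
    have h1 := hLip f
    rw [hc, abs_of_pos hcpos] at h1
    by_contra hC
    push_neg at hC
    nlinarith [dist_nonneg (x := (1 : G)) (y := f)]
  set m : ℕ := ⌈(C * K + k * D) / c⌉₊ with hm
  have hm1 : (C * K + k * D) / c ≤ (m : ℝ) := Nat.le_ceil _
  have hm2 : C * K + k * D ≤ c * m := by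
    rw [div_le_iff₀ hcpos] at hm1
    linarith
  refine ⟨f ^ m, fun l hl hlen => ?_⟩
  have h5 := main m k l hl hlen
  have h6 : C * K ≤ C * dist (f ^ m) l.prod := by linarith
  exact (mul_le_mul_iff_right₀ hCpos).mp h6
end

section
/- Let G be a group generated by a conjugation-invariant symmetric subset A ∋ 1, and define the word norm ‖f‖_A := min{m : f = h₁⋯h_m, hᵢ ∈ A}. If there exists a homogeneous quasimorphism φ̄: G → ℝ with defect D vanishing on A and an element f with φ̄(f) ≠ 0, then the metric d_A(f,g) := ‖fg⁻¹‖_A has infinite diameter on G; moreover the stable norm satisfies lim_{k→∞} ‖f^k‖_A / k ≥ |φ̄(f)| / (|φ̄(f)| + D) > 0. -/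
/-- If a homogeneous quasimorphism vanishes on a conjugation-invariant symmetric
generating set `A` and is nonzero on some `f`, then the word metric w.r.t. `A` has
infinite diameter, and the stable word norm of `f` is at least `|φ(f)|/(|φ(f)|+D) > 0`. -/
theorem word_metric_infinite_diameter_of_qm {G : Type*} [Group G]
    (A : Set G) (hone : (1 : G) ∈ A) (hAsymm : A⁻¹ = A)
    (hAconj : ∀ g : G, ∀ a ∈ A, g * a * g⁻¹ ∈ A)
    (ν : G → ℕ)
    (hν : ∀ f : G, IsLeast
      {m : ℕ | ∃ l : List G, (∀ x ∈ l, x ∈ A) ∧ l.length = m ∧ l.prod = f} (ν f))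
    (φ : G → ℝ) (D : ℝ)
    (hD : ∀ a b : G, |φ (a * b) - φ a - φ b| ≤ D)
    (hhom : ∀ (g : G) (k : ℤ), φ (g ^ k) = k * φ g)
    (hvan : ∀ a ∈ A, φ a = 0)
    (f : G) (hf : φ f ≠ 0) :
    (∀ K : ℝ, ∃ g h : G, K < (ν (g * h⁻¹) : ℝ)) ∧
    ∃ L : ℝ, Filter.Tendsto (fun k : ℕ => (ν (f ^ k) : ℝ) / k) Filter.atTop (nhds L) ∧
      |φ f| / (|φ f| + D) ≤ L ∧ 0 < |φ f| / (|φ f| + D) := by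
  have hφ1 : φ 1 = 0 := by simpa using hhom 1 0
  have hDnn : 0 ≤ D := by simpa [hφ1] using hD 1 1
  -- bound on products of elements of A
  have hlist : ∀ l : List G, (∀ x ∈ l, x ∈ A) → |φ l.prod| ≤ l.length * D := by
    intro l
    induction l with
    | nil => intro _; simp [hφ1]
    | cons a t ih =>
      intro hmem
      have ha : φ a = 0 := hvan a (hmem a (by simp))
      have h1 := hD a t.prod
      have h2 := ih (fun x hx => hmem x (by simp [hx]))
      have : |φ (a * t.prod)| ≤ D + |φ t.prod| := by
        have h1' : |φ (a * t.prod) - φ t.prod| ≤ D := by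
          simpa [ha] using hD a t.prod
        have h3 := abs_sub_abs_le_abs_sub (φ (a * t.prod)) (φ t.prod)
        linarith
      calc |φ (List.prod (a :: t))| = |φ (a * t.prod)| := by simp
        _ ≤ D + |φ t.prod| := this
        _ ≤ D + t.length * D := by linarith
        _ = (a :: t).length * D := by simp; ring
  have hbound : ∀ g : G, |φ g| ≤ (ν g : ℝ) * D := by
    intro g
    obtain ⟨l, hlA, hlen, hprod⟩ := (hν g).1
    calc |φ g| = |φ l.prod| := by rw [hprod]
      _ ≤ l.length * D := hlist l hlA
      _ = (ν g : ℝ) * D := by rw [hlen]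
  have hfpos : 0 < |φ f| := abs_pos.mpr hf
  have hDpos : 0 < D := by
    rcases lt_or_eq_of_le hDnn with h | h
    · exact h
    · exfalso
      have := hbound f
      rw [← h] at this
      simp at this
      exact hf this
  have hk : ∀ k : ℕ, (k : ℝ) * |φ f| / D ≤ (ν (f ^ k) : ℝ) := by
    intro k
    have h1 : |φ (f ^ k)| = (k : ℝ) * |φ f| := by
      have := hhom f (k : ℤ)
      rw [zpow_natCast] at this
      rw [this, abs_mul]
      simp
    have h2 := hbound (f ^ k)
    rw [h1] at h2
    rw [div_le_iff₀ hDpos]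
    linarith
  -- subadditivity
  have hsub : Subadditive (fun k : ℕ => (ν (f ^ k) : ℝ)) := by
    intro m n
    have : ν (f ^ (m + n)) ≤ ν (f ^ m) + ν (f ^ n) := by
      obtain ⟨l1, h1A, h1len, h1prod⟩ := (hν (f ^ m)).1
      obtain ⟨l2, h2A, h2len, h2prod⟩ := (hν (f ^ n)).1
      apply (hν (f ^ (m + n))).2
      refine ⟨l1 ++ l2, ?_, by simp [h1len, h2len], by simp [h1prod, h2prod, pow_add]⟩
      intro x hx
      rcases List.mem_append.mp hx with h | h
      exacts [h1A x h, h2A x h]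
    show (ν (f ^ (m + n)) : ℝ) ≤ (ν (f ^ m) : ℝ) + (ν (f ^ n) : ℝ)
    exact_mod_cast this
  have hbdd : BddBelow (Set.range fun n : ℕ => (ν (f ^ n) : ℝ) / n) := by
    refine ⟨0, ?_⟩
    rintro x ⟨n, rfl⟩
    positivity
  constructor
  · intro K
    obtain ⟨k, hk'⟩ := exists_nat_gt (K * D / |φ f|)
    refine ⟨f ^ k, 1, ?_⟩
    simp only [inv_one, mul_one]
    have h1 := hk k
    have h2 : K * D < (k : ℝ) * |φ f| := by
      have := (div_lt_iff₀ hfpos).mp hk'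
      linarith
    have h3 : K < (k : ℝ) * |φ f| / D := (lt_div_iff₀ hDpos).mpr h2
    linarith
  · refine ⟨hsub.lim, hsub.tendsto_lim hbdd, ?_, ?_⟩
    · rw [Subadditive.lim]
      apply le_csInf ((Set.nonempty_Ici).image _)
      rintro x ⟨n, hn, rfl⟩
      simp only [Set.mem_Ici] at hn
      have hnpos : (0 : ℝ) < n := by exact_mod_cast hn
      have h1 : |φ f| / D ≤ (ν (f ^ n) : ℝ) / n := by
        rw [le_div_iff₀ hnpos]
        have := hk n
        rw [div_mul_eq_mul_div, mul_comm]
        exact this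
      have h2 : |φ f| / (|φ f| + D) ≤ |φ f| / D := by
        gcongr
        linarith
      linarith
    · positivity
end

section
/- Let G be a group with a right-invariant metric d and φ̄: G → ℝ a homogeneous quasimorphism with defect D. Suppose there is C > 0 with |φ̄(g)| ≤ C·d(1,g) for all g. Then for any f, h ∈ G and any p ∈ ℕ, |φ̄(f) − φ̄(h)| ≤ (D + |φ̄(f^p h^{−p})|)/p ≤ (D + C·d(h^p, f^p))/p. In particular, if for every p there exist elements h with d(h^p, f^p) < 1, then φ̄ is continuous with respect to such approximations: |φ̄(f) − φ̄(h)| ≤ (D + C)/p. -/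
/-- Continuity estimate: for a Lipschitz homogeneous quasimorphism on a group with a
right-invariant metric, `|φ(f) − φ(h)| ≤ (D + |φ(f^p h^{−p})|)/p ≤ (D + C·d(h^p, f^p))/p`,
and if `d(h^p, f^p) < 1` then `|φ(f) − φ(h)| ≤ (D + C)/p`. -/
theorem homogeneous_qm_continuity_estimate {G : Type*} [Group G] [MetricSpace G]
    (hinv : ∀ a b f : G, dist (a * f) (b * f) = dist a b)
    (φ : G → ℝ) (D C : ℝ) (hC : 0 < C)
    (hD : ∀ a b : G, |φ (a * b) - φ a - φ b| ≤ D)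
    (hhom : ∀ (g : G) (k : ℤ), φ (g ^ k) = k * φ g)
    (hLip : ∀ g : G, |φ g| ≤ C * dist 1 g)
    (f h : G) (p : ℕ) (hp : 1 ≤ p) :
    |φ f - φ h| ≤ (D + |φ (f ^ p * (h ^ p)⁻¹)|) / p ∧
    (D + |φ (f ^ p * (h ^ p)⁻¹)|) / p ≤ (D + C * dist (h ^ p) (f ^ p)) / p ∧
    (dist (h ^ p) (f ^ p) < 1 → |φ f - φ h| ≤ (D + C) / p) := by
  have hp0 : (0:ℝ) < p := by exact_mod_cast hp
  have hfp : φ (f ^ p) = p * φ f := by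
    have := hhom f (p : ℤ); rw [zpow_natCast] at this; exact_mod_cast this
  have hphp : φ ((h ^ p)⁻¹) = -(p * φ h) := by
    have := hhom h (-(p : ℤ))
    rw [zpow_neg, zpow_natCast] at this
    push_cast at this; linarith
  have key : |φ f - φ h| ≤ (D + |φ (f ^ p * (h ^ p)⁻¹)|) / p := by
    have hd := hD (f ^ p) ((h ^ p)⁻¹)
    rw [hfp, hphp] at hd
    have habs : |(φ f - φ h) * p| ≤ D + |φ (f ^ p * (h ^ p)⁻¹)| := by
      have h1 := le_abs_self (φ (f ^ p * (h ^ p)⁻¹))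
      have h2 := neg_abs_le (φ (f ^ p * (h ^ p)⁻¹))
      have h3 := abs_le.mp hd
      rw [abs_le]
      constructor <;> nlinarith
    rw [abs_mul, abs_of_pos hp0] at habs
    rw [le_div_iff₀ hp0]
    exact habs
  have hdist : dist (1 : G) (f ^ p * (h ^ p)⁻¹) = dist (h ^ p) (f ^ p) := by
    have := hinv 1 (f ^ p * (h ^ p)⁻¹) (h ^ p)
    rw [one_mul, inv_mul_cancel_right] at this
    rw [← this, dist_comm]
  have mid : (D + |φ (f ^ p * (h ^ p)⁻¹)|) / p ≤ (D + C * dist (h ^ p) (f ^ p)) / p := by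
    gcongr
    rw [← hdist]; exact hLip _
  refine ⟨key, mid, fun hlt => ?_⟩
  have : (D + C * dist (h ^ p) (f ^ p)) / p ≤ (D + C) / p := by
    gcongr
    nlinarith [dist_nonneg (x := h ^ p) (y := f ^ p)]
  linarith [key.trans mid]
end

section
/- Let φ̄: G → ℝ be a nonzero homogeneous quasimorphism that is not a homomorphism, with defect D, on a group G, vanishing on a symmetric conjugation-invariant generating set A. Then the stably unbounded property holds: there exists g ∈ G whose stable autonomous norm ‖g‖_st := lim_k ‖g^k‖_A / k is strictly positive; indeed any g with φ̄(g) ≠ 0 works, since ‖f‖_A ≥ |φ̄(f)|/(sup_{a∈A}|φ̄(a)| + D) = |φ̄(f)|/D. -/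
/-- Stable unboundedness: if a homogeneous quasimorphism that is not a homomorphism
vanishes on a conjugation-invariant symmetric generating set `A`, then
`‖f‖_A ≥ |φ(f)|/D` and some `g` has strictly positive stable word norm. -/
theorem stably_unbounded_of_qm {G : Type*} [Group G]
    (A : Set G) (hone : (1 : G) ∈ A) (hAsymm : A⁻¹ = A)
    (hAconj : ∀ g : G, ∀ a ∈ A, g * a * g⁻¹ ∈ A)
    (ν : G → ℕ)
    (hν : ∀ f : G, IsLeast
      {m : ℕ | ∃ l : List G, (∀ x ∈ l, x ∈ A) ∧ l.length = m ∧ l.prod = f} (ν f))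
    (φ : G → ℝ) (D : ℝ)
    (hD : ∀ a b : G, |φ (a * b) - φ a - φ b| ≤ D)
    (hhom : ∀ (g : G) (k : ℤ), φ (g ^ k) = k * φ g)
    (hvan : ∀ a ∈ A, φ a = 0)
    (hnonhom : ∃ a b : G, φ (a * b) ≠ φ a + φ b)
    (hnonzero : ∃ f : G, φ f ≠ 0) :
    (∀ f : G, |φ f| / D ≤ (ν f : ℝ)) ∧
    ∃ g : G, ∃ L : ℝ,
      Filter.Tendsto (fun k : ℕ => (ν (g ^ k) : ℝ) / k) Filter.atTop (nhds L) ∧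
      0 < L := by
  -- D > 0
  obtain ⟨a, b, hab⟩ := hnonhom
  have hDpos : 0 < D := by
    have h1 : 0 < |φ (a * b) - φ a - φ b| := by
      rw [abs_pos]
      intro h
      exact hab (by linarith [sub_eq_zero.mp (by linarith : φ (a * b) - (φ a + φ b) = 0)])
    exact lt_of_lt_of_le h1 (hD a b)
  have hφ1 : φ 1 = 0 := by
    have := hhom 1 0
    simpa using this
  -- key list lemma
  have key : ∀ l : List G, (∀ x ∈ l, x ∈ A) → |φ l.prod| ≤ l.length * D := by
    intro l
    induction l with
    | nil => intro _; simp [hφ1]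
    | cons x t ih =>
      intro hmem
      have hx : φ x = 0 := hvan x (hmem x (by simp))
      have ht := ih (fun y hy => hmem y (by simp [hy]))
      have h3 := hD x t.prod
      have : |φ (x * t.prod)| ≤ |φ x| + |φ t.prod| + D := by
        have := abs_sub_abs_le_abs_sub (φ (x * t.prod)) (φ x + φ t.prod)
        have h4 : |φ (x * t.prod) - (φ x + φ t.prod)| ≤ D := by
          have : φ (x * t.prod) - (φ x + φ t.prod) = φ (x * t.prod) - φ x - φ t.prod := by ring
          rw [this]; exact h3
        calc |φ (x * t.prod)| ≤ |φ x + φ t.prod| + |φ (x * t.prod) - (φ x + φ t.prod)| := by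
              have := abs_add_le (φ x + φ t.prod) (φ (x * t.prod) - (φ x + φ t.prod))
              simpa using this
          _ ≤ (|φ x| + |φ t.prod|) + D := add_le_add (abs_add_le _ _) h4
      simp only [List.prod_cons, List.length_cons]
      calc |φ (x * t.prod)| ≤ |φ x| + |φ t.prod| + D := this
        _ ≤ 0 + t.length * D + D := by rw [hx]; simp; exact ht
        _ = ((t.length + 1 : ℕ) : ℝ) * D := by push_cast; ring
      
  have part1 : ∀ f : G, |φ f| / D ≤ (ν f : ℝ) := by
    intro f
    obtain ⟨l, hl, hlen, hprod⟩ := (hν f).1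
    rw [div_le_iff₀ hDpos]
    calc |φ f| = |φ l.prod| := by rw [hprod]
      _ ≤ l.length * D := key l hl
      _ = (ν f : ℝ) * D := by rw [hlen]
  refine ⟨part1, ?_⟩
  obtain ⟨g, hg⟩ := hnonzero
  set c : ℝ := |φ g| / D with hc
  have hcpos : 0 < c := div_pos (abs_pos.mpr hg) hDpos
  -- subadditivity
  have hsub : Subadditive (fun k => (ν (g ^ k) : ℝ)) := by
    intro m n
    obtain ⟨l1, hl1, hlen1, hprod1⟩ := (hν (g ^ m)).1
    obtain ⟨l2, hl2, hlen2, hprod2⟩ := (hν (g ^ n)).1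
    have hmem : ν (g ^ (m + n)) ≤ l1.length + l2.length := by
      apply (hν (g ^ (m + n))).2
      refine ⟨l1 ++ l2, ?_, by simp, ?_⟩
      · intro x hx
        rcases List.mem_append.mp hx with h | h
        · exact hl1 x h
        · exact hl2 x h
      · rw [List.prod_append, hprod1, hprod2, pow_add]
    push_cast [hlen1, hlen2] at hmem ⊢
    exact_mod_cast hmem
  -- lower bound c on u k / k for k ≥ 1
  have hlow : ∀ k : ℕ, 1 ≤ k → c ≤ (ν (g ^ k) : ℝ) / k := by
    intro k hk
    have hkpos : (0 : ℝ) < k := by exact_mod_cast hk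
    rw [le_div_iff₀ hkpos]
    have h1 := part1 (g ^ k)
    have h2 : |φ (g ^ k)| = k * |φ g| := by
      have := hhom g (k : ℤ)
      rw [zpow_natCast] at this
      rw [this, abs_mul]
      simp
    have : (k : ℝ) * |φ g| / D ≤ (ν (g ^ k) : ℝ) := by rw [← h2]; exact h1
    calc c * k = (k : ℝ) * |φ g| / D := by rw [hc]; ring
      _ ≤ (ν (g ^ k) : ℝ) := this
  have hbdd : BddBelow (Set.range fun n : ℕ => (ν (g ^ n) : ℝ) / n) := by
    refine ⟨0, ?_⟩
    rintro x ⟨n, rfl⟩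
    positivity
  refine ⟨g, hsub.lim, hsub.tendsto_lim hbdd, ?_⟩
  have : c ≤ hsub.lim := by
    rw [Subadditive.lim]
    apply le_csInf
    · exact ⟨(ν (g ^ 1) : ℝ) / (1 : ℕ), ⟨1, by simp, rfl⟩⟩
    · rintro x ⟨n, hn, rfl⟩
      exact hlow n hn
  linarith
end
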